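/- Let q be an odd prime. Then every coefficient of the polynomial f_q(x) − (x − x^q) lies in qℤ_(q); that is, f_q(x) ≡ x − x^q (mod q) as polynomials with coefficients in ℤ_(q). In particular, f_q(c) ∈ qℤ_(q) for every c ∈ ℤ_(q). -/

import Mathlib

open Finset Polynomial

/-- `Li s` is the polylogarithm of negative index, `Li_{-s}(x) = (x d/dx)^s (x/(1-x))`,
viewed as a function `ℚ → ℚ` (well defined away from `x = 1`). -/
noncomputable def Li (s : ℕ) : ℚ → ℚ :=
  (fun f x => x * deriv f x)^[s] (fun x => x / (1 - x))

/-- `zLocSpan q c x` means `x ∈ c·ℤ_(q)`, i.e. `x = c·(a/b)` with `q ∤ b`. -/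
def zLocSpan (q : ℕ) (c x : ℚ) : Prop :=
  ∃ a b : ℤ, ¬ (q : ℤ) ∣ b ∧ x * (b : ℚ) = c * (a : ℚ)

/-- The integer coefficient `Σ_{1≤j,k,l≤q−1, k ≡ jl (mod q)} (−1)^k C(t,k)·j·l`. -/
def fqCoeff (q t : ℕ) : ℤ :=
  ∑ j ∈ Finset.Icc 1 (q-1), ∑ k ∈ Finset.Icc 1 (q-1), ∑ l ∈ Finset.Icc 1 (q-1),
    if (k : ZMod q) = (j : ZMod q) * (l : ZMod q) then (-1)^k * (t.choose k : ℤ) * j * l else 0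

/-- The polynomial `f_q(x) = Σ_{t=1}^q fqCoeff q t · x^t / t ∈ ℚ[x]` (in fact in `ℤ_(q)[x]`). -/
noncomputable def fqPoly (q : ℕ) : Polynomial ℚ :=
  ∑ t ∈ Finset.Icc 1 q, Polynomial.C ((fqCoeff q t : ℚ) / (t : ℚ)) * Polynomial.X ^ t

/-- Reduction of a rational with denominator prime to `N` to `ZMod N`. -/
def ratToZMod (N : ℕ) (x : ℚ) : ZMod N := (x.num : ZMod N) * ((x.den : ℕ) : ZMod N)⁻¹

/-- The set `S_q = { a − f_q(a) mod q² : a = 0,…,q−1 } ⊆ ℤ/q²ℤ`. -/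
def Sq (q : ℕ) : Set (ZMod (q^2)) :=
  { y | ∃ a : ℕ, a < q ∧ y = ratToZMod (q^2) ((a : ℚ) - (fqPoly q).eval (a : ℚ)) }

/-- Congruence modulo the ideal of `ℤ[ζ]` generated by `(1-ζ)^e`, for elements of `ℂ`. -/
def congZeta (ζ : ℂ) (e : ℕ) (x y : ℂ) : Prop :=
  ∃ P : Polynomial ℤ, x - y = (1 - ζ)^e * (Polynomial.aeval ζ P)

/-- `jstar q j` is the representative in `[0, q-1]` of the inverse of `j` mod `q`. -/
def jstar (q j : ℕ) : ℕ := ((j : ZMod q)⁻¹).val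

/-- `istar q a` is the representative in `[0, q-1]` of the inverse of the integer `a` mod `q`. -/
def istar (q : ℕ) (a : ℤ) : ℕ := ((a : ZMod q)⁻¹).val

/-- `μ^{(i)} = ζ^i · ∏_{j=1}^{q−1} (m − n ζ^j)^{j*} ∈ ℤ[ζ_q] ⊆ ℂ`. -/
noncomputable def mu (q : ℕ) (m n : ℤ) (i : ℕ) (ζ : ℂ) : ℂ :=
  ζ^i * ∏ j ∈ Finset.Icc 1 (q-1), ((m : ℂ) - (n : ℂ) * ζ^j)^(jstar q j)

/-- `𝓕_s(x) = Σ_{t=0}^s Σ_{s₁,…,s_t ≥ 1, s₁+⋯+s_t=s} s!/(s₁!⋯s_t!) x^t`, as a function `ℚ → ℚ`. -/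
def Fcal (s : ℕ) (x : ℚ) : ℚ :=
  ∑ t ∈ Finset.range (s+1),
    ∑ c ∈ (Finset.Nat.antidiagonalTuple t s).filter (fun c => ∀ i, 1 ≤ c i),
      (Nat.multinomial Finset.univ c : ℚ) * x ^ t

/-- Coefficientwise reduction of `f_q` mod `q²`. -/
noncomputable def fqBar (q : ℕ) : Polynomial (ZMod (q^2)) :=
  ∑ t ∈ Finset.Icc 1 q,
    Polynomial.C (ratToZMod (q^2) ((fqCoeff q t : ℚ) / (t : ℚ))) * Polynomial.X ^ t

/- ### auxiliary development -/

section Aux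

lemma alt_sum (t N : ℕ) (ht : 1 ≤ t) (htN : t ≤ N) :
    (∑ k ∈ Finset.Icc 1 N, (-1:ℤ)^k * k * (t.choose k : ℤ)) = if t = 1 then -1 else 0 := by
  have h1 : Finset.Icc 1 N = Finset.map ⟨Nat.succ, Nat.succ_injective⟩ (Finset.range N) := by
    ext x
    simp only [Finset.mem_Icc, Finset.mem_map, Finset.mem_range, Function.Embedding.coeFn_mk, Nat.succ_eq_add_one]
    constructor
    · rintro ⟨h1, h2⟩; exact ⟨x - 1, by omega⟩
    · rintro ⟨a, ha, rfl⟩; omega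
  rw [h1, Finset.sum_map]
  simp only [Function.Embedding.coeFn_mk, Nat.succ_eq_add_one]
  have key : ∀ i, (t.choose (i+1) : ℤ) * (i+1) = t * ((t-1).choose i : ℤ) := by
    intro i
    have ht' : t - 1 + 1 = t := by omega
    have hnat : t * (t-1).choose i = t.choose (i+1) * (i+1) := by
      simpa [Nat.succ_eq_add_one, ht'] using Nat.add_one_mul_choose_eq (t-1) i
    exact_mod_cast hnat.symm
  have this2 : ∀ i ∈ Finset.range N, (-1:ℤ)^(i+1) * (i+1) * (t.choose (i+1) : ℤ)
      = -(t : ℤ) * ((-1)^i * ((t-1).choose i : ℤ)) := by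
    intro i _
    rw [pow_succ]
    have h2 := key i
    push_cast at h2 ⊢
    linear_combination (-(-1:ℤ)^i) * h2
  push_cast
  rw [Finset.sum_congr rfl this2, ← Finset.mul_sum]
  have hrange : (∑ i ∈ Finset.range N, (-1:ℤ)^i * ((t-1).choose i : ℤ))
      = ∑ i ∈ Finset.range ((t-1)+1), (-1:ℤ)^i * ((t-1).choose i : ℤ) := by
    refine (Finset.sum_subset ?_ ?_).symm
    · intro x hx; simp at hx ⊢; omega
    · intro x _ hx
      simp only [Finset.mem_range, not_lt] at hx
      rw [Nat.choose_eq_zero_of_lt (by omega)]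
      simp
  rw [hrange, Int.alternating_sum_range_choose]
  by_cases h : t = 1
  · simp [h]
  · have : ¬ (t - 1 = 0) := by omega
    simp [h, this]

lemma choose_mod (q : ℕ) (hq : q.Prime) : ∀ i ≤ q - 1,
    (((q-1).choose i : ℤ) : ZMod q) = (-1)^i := by
  intro i
  induction i with
  | zero => simp
  | succ n ih =>
    intro hn
    have hq1 : q - 1 + 1 = q := by have := hq.pos; omega
    have hdvd : q ∣ q.choose (n+1) := hq.dvd_choose_self (by omega) (by omega)
    have hpascal : (q-1).choose n + (q-1).choose (n+1) = q.choose (n+1) := by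
      have h3 := Nat.choose_succ_succ (q-1) n
      simp only [Nat.succ_eq_add_one, hq1] at h3
      exact h3.symm
    have h4 : (((q-1).choose n : ℤ) : ZMod q) + (((q-1).choose (n+1) : ℤ) : ZMod q) = 0 := by
      have h5 : ((q.choose (n+1) : ℤ) : ZMod q) = 0 := by
        rw [ZMod.intCast_zmod_eq_zero_iff_dvd]
        exact_mod_cast Int.natCast_dvd_natCast.mpr hdvd
      rw [← h5, ← hpascal]; push_cast; ring
    rw [ih (by omega)] at h4
    rw [pow_succ]
    linear_combination h4

noncomputable section Core
variable (q : ℕ)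

def lstar (j k : ℕ) : ℕ := (((j : ZMod q))⁻¹ * (k : ZMod q)).val

def dsum (k : ℕ) : ℤ := ∑ j ∈ Finset.Icc 1 (q-1), (j : ℤ) * (lstar q j k : ℤ)

variable (hq : q.Prime)
include hq

lemma mem_lt {j : ℕ} (hj : j ∈ Finset.Icc 1 (q-1)) : j < q :=
  lt_of_le_of_lt (Finset.mem_Icc.mp hj).2 (Nat.sub_lt hq.pos one_pos)

lemma mem_ne_zero {j : ℕ} (hj : j ∈ Finset.Icc 1 (q-1)) : (j : ZMod q) ≠ 0 := by
  haveI : NeZero q := ⟨hq.ne_zero⟩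
  intro h
  rw [ZMod.natCast_eq_zero_iff] at h
  have := Nat.le_of_dvd (Nat.lt_of_lt_of_le Nat.zero_lt_one (Finset.mem_Icc.mp hj).1) h
  exact absurd (mem_lt q hq hj) (not_lt.mpr this)

lemma lstar_mem {j k : ℕ} (hj : j ∈ Finset.Icc 1 (q-1)) (hk : k ∈ Finset.Icc 1 (q-1)) :
    lstar q j k ∈ Finset.Icc 1 (q-1) := by
  haveI : Fact q.Prime := ⟨hq⟩
  have hne : ((j : ZMod q))⁻¹ * (k : ZMod q) ≠ 0 :=
    mul_ne_zero (inv_ne_zero (mem_ne_zero q hq hj)) (mem_ne_zero q hq hk)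
  simp only [Finset.mem_Icc]
  refine ⟨Nat.one_le_iff_ne_zero.mpr ?_, Nat.le_sub_one_of_lt (ZMod.val_lt _)⟩
  intro h0
  exact hne (by rwa [← ZMod.val_eq_zero])

lemma cond_iff {j k l : ℕ} (hj : j ∈ Finset.Icc 1 (q-1)) (hl : l ∈ Finset.Icc 1 (q-1)) :
    ((k : ZMod q) = (j : ZMod q) * (l : ZMod q)) ↔ l = lstar q j k := by
  haveI : Fact q.Prime := ⟨hq⟩
  have hj0 : (j : ZMod q) ≠ 0 := mem_ne_zero q hq hj
  constructor
  · intro h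
    rw [lstar, h, ← mul_assoc, inv_mul_cancel₀ hj0, one_mul,
      ZMod.val_cast_of_lt (mem_lt q hq hl)]
  · intro h
    have : (l : ZMod q) = ((j : ZMod q))⁻¹ * (k : ZMod q) := by
      rw [h, lstar]; simp [ZMod.natCast_val, ZMod.cast_id]
    rw [this, ← mul_assoc, mul_inv_cancel₀ hj0, one_mul]

lemma fqCoeff_eq (t : ℕ) :
    fqCoeff q t = ∑ k ∈ Finset.Icc 1 (q-1), (-1)^k * (t.choose k : ℤ) * dsum q k := by
  rw [fqCoeff, Finset.sum_comm]
  refine Finset.sum_congr rfl fun k hk => ?_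
  rw [dsum, Finset.mul_sum]
  refine Finset.sum_congr rfl fun j hj => ?_
  have h6 : ∀ l ∈ Finset.Icc 1 (q-1),
      (if (k : ZMod q) = (j : ZMod q) * (l : ZMod q) then (-1)^k * (t.choose k : ℤ) * j * l else 0)
      = (if l = lstar q j k then (-1)^k * (t.choose k : ℤ) * j * l else 0) := by
    intro l hl
    exact if_congr (cond_iff q hq hj hl) rfl rfl
  rw [Finset.sum_congr rfl h6, Finset.sum_ite_eq' (Finset.Icc 1 (q-1)) (lstar q j k)
    (fun l => (-1)^k * (t.choose k : ℤ) * j * l), if_pos (lstar_mem q hq hj hk)]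
  ring

lemma dsum_mod {k : ℕ} (hk : k ∈ Finset.Icc 1 (q-1)) :
    ((dsum q k : ℤ) : ZMod q) = - (k : ZMod q) := by
  haveI : Fact q.Prime := ⟨hq⟩
  rw [dsum]
  push_cast
  have h7 : ∀ j ∈ Finset.Icc 1 (q-1), (j : ZMod q) * (lstar q j k : ZMod q) = (k : ZMod q) := by
    intro j hj
    rw [lstar]
    simp only [ZMod.natCast_val, ZMod.cast_id]
    rw [← mul_assoc, mul_inv_cancel₀ (mem_ne_zero q hq hj), one_mul]
  rw [Finset.sum_congr rfl h7, Finset.sum_const, Nat.card_Icc]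
  simp only [nsmul_eq_mul]
  have hq1 : (1:ℕ) ≤ q := hq.one_lt.le
  have h2 : q - 1 + 1 - 1 = q - 1 := by omega
  rw [h2, Nat.cast_sub hq1, ZMod.natCast_self, Nat.cast_one, zero_sub, neg_one_mul]

lemma fqA {t : ℕ} (ht : t ∈ Finset.Icc 1 (q-1)) :
    ((fqCoeff q t : ℤ) : ZMod q) = if t = 1 then 1 else 0 := by
  rw [fqCoeff_eq q hq]
  push_cast
  have h2 : ∀ k ∈ Finset.Icc 1 (q-1),
      (-1:ZMod q)^k * (t.choose k : ZMod q) * ((dsum q k : ℤ) : ZMod q)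
      = -((-1:ZMod q)^k * k * (t.choose k : ZMod q)) := by
    intro k hk; rw [dsum_mod q hq hk]; ring
  rw [Finset.sum_congr rfl h2]
  rw [Finset.sum_neg_distrib]
  have h3 : (∑ k ∈ Finset.Icc 1 (q-1), (-1:ZMod q)^k * k * (t.choose k : ZMod q))
      = ((∑ k ∈ Finset.Icc 1 (q-1), (-1:ℤ)^k * k * (t.choose k : ℤ) : ℤ) : ZMod q) := by
    push_cast; rfl
  rw [h3, alt_sum t (q-1) (Finset.mem_Icc.mp ht).1 (Finset.mem_Icc.mp ht).2]
  by_cases h : t = 1 <;> simp [h]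

lemma qmul_cast {A B : ℤ} (h : (A : ZMod q) = (B : ZMod q)) :
    (((q:ℤ) * A : ℤ) : ZMod (q^2)) = (((q:ℤ) * B : ℤ) : ZMod (q^2)) := by
  rw [ZMod.intCast_eq_intCast_iff] at h ⊢
  have hd : (q:ℤ) ∣ B - A := h.dvd
  have : ((q:ℤ)^2) ∣ (q:ℤ)*B - (q:ℤ)*A := by
    rw [← mul_sub, sq]
    exact mul_dvd_mul_left _ hd
  rw [Int.modEq_iff_dvd]
  exact_mod_cast this

lemma fqB : ((fqCoeff q q : ℤ) : ZMod (q^2)) = -(q : ZMod (q^2)) := by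
  rw [fqCoeff_eq q hq]
  push_cast
  have hterm : ∀ k ∈ Finset.Icc 1 (q-1),
      (-1:ZMod (q^2))^k * (q.choose k : ZMod (q^2)) * ((dsum q k : ℤ) : ZMod (q^2))
      = (q : ZMod (q^2)) := by
    intro k hk
    have hk1 : 1 ≤ k := (Finset.mem_Icc.mp hk).1
    have hklt : k < q := mem_lt q hq hk
    have hndvd : ¬ q ∣ k := fun h => absurd (Nat.le_of_dvd (by omega) h) (by omega)
    have hcop : Nat.Coprime k (q^2) :=
      Nat.Coprime.pow_right 2 ((hq.coprime_iff_not_dvd.mpr hndvd).symm)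
    have hu : IsUnit (k : ZMod (q^2)) := (ZMod.isUnit_iff_coprime k (q^2)).mpr hcop
    have hq1 : q - 1 + 1 = q := by have := hq.pos; omega
    have hk1' : k - 1 + 1 = k := by omega
    have hchoose : (q:ℤ) * (((q-1).choose (k-1) : ℕ) : ℤ) = ((q.choose k : ℕ) : ℤ) * k := by
      have hnat : q * (q-1).choose (k-1) = q.choose k * k := by
        simpa [Nat.succ_eq_add_one, hq1, hk1'] using Nat.add_one_mul_choose_eq (q-1) (k-1)
      exact_mod_cast hnat
    have hA : (((-1:ℤ)^k * (((q-1).choose (k-1) : ℕ) : ℤ) * dsum q k : ℤ) : ZMod q)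
        = (((k:ℕ) : ℤ) : ZMod q) := by
      have hcm := choose_mod q hq (k-1) (by omega)
      push_cast
      push_cast at hcm
      rw [hcm, dsum_mod q hq hk]
      have hsq : ((-1:ZMod q)^(k-1))^2 = 1 := by
        rw [← pow_mul, mul_comm, pow_mul]; norm_num
      have hps : (-1:ZMod q)^k = (-1:ZMod q)^(k-1) * (-1) := by
        rw [← pow_succ]; congr 1; omega
      rw [hps]
      linear_combination (k:ZMod q) * hsq
    refine hu.mul_left_cancel ?_
    calc (k:ZMod (q^2)) * ((-1:ZMod (q^2))^k * (q.choose k : ZMod (q^2)) * ((dsum q k : ℤ) : ZMod (q^2)))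
        = ((((k:ℕ):ℤ) * ((-1)^k * ((q.choose k : ℕ) : ℤ) * dsum q k) : ℤ) : ZMod (q^2)) := by
          push_cast; ring
      _ = (((q:ℤ) * ((-1)^k * (((q-1).choose (k-1) : ℕ) : ℤ) * dsum q k) : ℤ) : ZMod (q^2)) := by
          congr 1; linear_combination (-((-1:ℤ)^k * dsum q k)) * hchoose
      _ = (((q:ℤ) * (((k:ℕ)):ℤ) : ℤ) : ZMod (q^2)) := qmul_cast q hq hA
      _ = (k:ZMod (q^2)) * (q:ZMod (q^2)) := by push_cast; ring
  rw [Finset.sum_congr rfl hterm, Finset.sum_const, Nat.card_Icc, nsmul_eq_mul]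
  have h2 : q - 1 + 1 - 1 = q - 1 := by omega
  rw [h2, Nat.cast_sub hq.one_lt.le, Nat.cast_one]
  have h0 : (q:ZMod (q^2)) * (q:ZMod (q^2)) = 0 := by
    rw [← Nat.cast_mul, ← sq, ZMod.natCast_self]
  linear_combination h0

lemma fqA' {t : ℕ} (ht : t ∈ Finset.Icc 1 (q-1)) :
    ∃ m : ℤ, fqCoeff q t = (if t = 1 then 1 else 0) + q * m := by
  have h := fqA q hq ht
  have : ((fqCoeff q t - (if t = 1 then 1 else 0) : ℤ) : ZMod q) = 0 := by
    push_cast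
    rw [h]
    by_cases ht1 : t = 1 <;> simp [ht1]
  rw [ZMod.intCast_zmod_eq_zero_iff_dvd] at this
  obtain ⟨m, hm⟩ := this
  exact ⟨m, by omega⟩

lemma fqB' : ∃ m : ℤ, fqCoeff q q = -q + q^2 * m := by
  have h := fqB q hq
  have : ((fqCoeff q q + q : ℤ) : ZMod (q^2)) = 0 := by
    push_cast
    rw [h]; ring
  rw [ZMod.intCast_zmod_eq_zero_iff_dvd] at this
  obtain ⟨m, hm⟩ := this
  refine ⟨m, ?_⟩
  push_cast at hm
  omega

end Core
end Aux

/- ### zLocSpan machinery -/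

section ZLoc
variable {q : ℕ} (hq : q.Prime)
include hq

lemma not_dvd_one' : ¬ (q:ℤ) ∣ (1:ℤ) := by
  intro h
  have := Int.le_of_dvd one_pos h
  have := hq.two_le
  omega

lemma zloc_zero (c : ℚ) : zLocSpan q c 0 :=
  ⟨0, 1, not_dvd_one' hq, by simp⟩

lemma zloc_add {c x y : ℚ} (hx : zLocSpan q c x) (hy : zLocSpan q c y) :
    zLocSpan q c (x + y) := by
  obtain ⟨a, b, hb, hab⟩ := hx
  obtain ⟨a', b', hb', hab'⟩ := hy
  have hqi : Prime (q:ℤ) := Int.prime_iff_natAbs_prime.mpr (by simpa using hq)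
  refine ⟨a * b' + a' * b, b * b', ?_, ?_⟩
  · intro h
    rcases hqi.dvd_mul.mp h with h | h
    exacts [hb h, hb' h]
  · push_cast
    linear_combination (b' : ℚ) * hab + (b : ℚ) * hab'

lemma zloc_mul {c x y : ℚ} (hx : zLocSpan q c x) (hy : zLocSpan q 1 y) :
    zLocSpan q c (x * y) := by
  obtain ⟨a, b, hb, hab⟩ := hx
  obtain ⟨a', b', hb', hab'⟩ := hy
  have hqi : Prime (q:ℤ) := Int.prime_iff_natAbs_prime.mpr (by simpa using hq)
  refine ⟨a * a', b * b', ?_, ?_⟩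
  · intro h
    rcases hqi.dvd_mul.mp h with h | h
    exacts [hb h, hb' h]
  · push_cast
    rw [one_mul] at hab'
    linear_combination (y * (b' : ℚ)) * hab + (c * (a : ℚ)) * hab'

lemma zloc_one : zLocSpan q 1 1 := ⟨1, 1, not_dvd_one' hq, by simp⟩

lemma zloc_pow {x : ℚ} (hx : zLocSpan q 1 x) (n : ℕ) : zLocSpan q 1 (x ^ n) := by
  induction n with
  | zero => simpa using zloc_one hq
  | succ n ih => rw [pow_succ]; exact zloc_mul hq ih hx

lemma zloc_sum {c : ℚ} {s : Finset ℕ} {f : ℕ → ℚ} (h : ∀ i ∈ s, zLocSpan q c (f i)) :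
    zLocSpan q c (∑ i ∈ s, f i) := by
  classical
  induction s using Finset.induction_on with
  | empty => simpa using zloc_zero hq c
  | insert _ _ hns ih =>
    rw [Finset.sum_insert hns]
    exact zloc_add hq (h _ (Finset.mem_insert_self _ _))
      (ih fun i hi => h i (Finset.mem_insert_of_mem hi))

end ZLoc

lemma fqPoly_coeff (q n : ℕ) :
    (fqPoly q).coeff n = if n ∈ Finset.Icc 1 q then (fqCoeff q n : ℚ) / n else 0 := by
  rw [fqPoly, Polynomial.finset_sum_coeff]
  simp only [Polynomial.coeff_C_mul, Polynomial.coeff_X_pow, mul_ite, mul_one, mul_zero]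
  rw [Finset.sum_ite_eq (Finset.Icc 1 q) n (fun t => (fqCoeff q t : ℚ) / t)]

theorem stmt13 (q : ℕ) (hq : q.Prime) (hodd : Odd q) :
    (∀ t : ℕ, zLocSpan q (q : ℚ) ((fqPoly q - (Polynomial.X - Polynomial.X ^ q)).coeff t)) ∧
      ∀ c : ℚ, zLocSpan q 1 c → zLocSpan q (q : ℚ) ((fqPoly q).eval c) := by
  have hq3 : 3 ≤ q := by
    obtain ⟨r, hr⟩ := hodd
    have h2 := hq.two_le
    have : q ≠ 2 := by omega
    omega
  have hqQ0 : (q : ℚ) ≠ 0 := Nat.cast_ne_zero.mpr (by omega)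
  have part1 : ∀ t : ℕ, zLocSpan q (q : ℚ) ((fqPoly q - (Polynomial.X - Polynomial.X ^ q)).coeff t) := by
    intro t
    rw [Polynomial.coeff_sub, Polynomial.coeff_sub, fqPoly_coeff, Polynomial.coeff_X,
      Polynomial.coeff_X_pow]
    by_cases hmem : t ∈ Finset.Icc 1 q
    · rw [if_pos hmem]
      have hmem' := Finset.mem_Icc.mp hmem
      by_cases htq : t = q
      · rw [htq]
        obtain ⟨m, hm⟩ := fqB' q hq
        rw [hm]
        have h1 : ¬ ((1:ℕ) = q) := by omega
        rw [if_neg h1, if_pos rfl]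
        refine ⟨m, 1, not_dvd_one' hq, ?_⟩
        push_cast
        field_simp
        ring
      · by_cases ht1 : t = 1
        · subst ht1
          obtain ⟨m, hm⟩ := fqA' q hq (Finset.mem_Icc.mpr ⟨le_refl 1, by omega⟩)
          rw [if_pos rfl] at hm
          rw [hm, if_pos rfl, if_neg htq]
          refine ⟨m, 1, not_dvd_one' hq, ?_⟩
          push_cast
          ring
        · obtain ⟨m, hm⟩ := fqA' q hq (Finset.mem_Icc.mpr ⟨hmem'.1, by omega⟩)
          rw [if_neg ht1] at hm
          rw [zero_add] at hm
          rw [hm]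
          have h1 : ¬ ((1:ℕ) = t) := fun h => ht1 h.symm
          rw [if_neg h1, if_neg htq]
          have htQ : (t : ℚ) ≠ 0 := Nat.cast_ne_zero.mpr (by omega)
          refine ⟨m, (t : ℤ), ?_, ?_⟩
          · intro h
            have hle := Int.le_of_dvd (by exact_mod_cast Nat.lt_of_lt_of_le Nat.zero_lt_one hmem'.1) h
            have h2 : t < q := by omega
            have : (q:ℤ) ≤ (t:ℤ) := hle
            have : q ≤ t := by exact_mod_cast this
            omega
          · push_cast
            field_simp
            ring
    · rw [if_neg hmem]
      have h1 : ¬ ((1:ℕ) = t) := by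
        intro h; exact hmem (Finset.mem_Icc.mpr ⟨by omega, by omega⟩)
      have h2 : ¬ (t = q) := by
        intro h; exact hmem (Finset.mem_Icc.mpr ⟨by omega, by omega⟩)
      rw [if_neg h1, if_neg h2]
      simpa using zloc_zero hq (q : ℚ)
  refine ⟨part1, ?_⟩
  intro c hc
  have hsplit : (fqPoly q).eval c
      = (fqPoly q - (Polynomial.X - Polynomial.X ^ q)).eval c + (c - c ^ q) := by
    simp [Polynomial.eval_sub]
  rw [hsplit]
  apply zloc_add hq
  · rw [Polynomial.eval_eq_sum_range]
    apply zloc_sum hq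
    intro i _
    exact zloc_mul hq (part1 i) (zloc_pow hq hc i)
  · obtain ⟨a, b, hb, hab⟩ := hc
    rw [one_mul] at hab
    haveI : Fact q.Prime := ⟨hq⟩
    have hbz : ((b : ℤ) : ZMod q) ≠ 0 := by
      rw [Ne, ZMod.intCast_zmod_eq_zero_iff_dvd]; exact hb
    have hdvd : (q : ℤ) ∣ a * b ^ (q - 1) - a ^ q := by
      rw [← ZMod.intCast_zmod_eq_zero_iff_dvd]
      push_cast
      rw [ZMod.pow_card, ZMod.pow_card_sub_one_eq_one hbz]
      ring
    obtain ⟨m, hm⟩ := hdvd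
    have hqi : Prime (q:ℤ) := Int.prime_iff_natAbs_prime.mpr (by simpa using hq)
    refine ⟨m, b ^ q, fun h => hb (hqi.dvd_of_dvd_pow h), ?_⟩
    have he : q = (q - 1) + 1 := by omega
    have hm2 : (a : ℚ) * (b : ℚ) ^ (q-1) - (a : ℚ) ^ ((q-1)+1) = (q : ℚ) * m := by
      rw [← he]; exact_mod_cast hm
    have h2 : (c * b) ^ ((q-1)+1) = (a : ℚ) ^ ((q-1)+1) := by rw [hab]
    have hcast : ((q - 1 : ℕ) : ℚ) = (q : ℚ) - 1 := by
      rw [Nat.cast_sub hq.one_lt.le, Nat.cast_one]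
    push_cast
    rw [he]
    push_cast
    linear_combination ((b:ℚ)^(q-1)) * hab - h2 + hm2 - (m:ℚ) * hcast
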